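/- The net reproductive number is bounded by the norms of the next-generation matrix and its newborn submatrix: R₀ ≤ ‖N̄‖ ≤ ‖N‖; moreover ‖W̄‖ ≤ ‖W‖. -/

import Mathlib

open Matrix BigOperators

/-- Spectral radius of a real square matrix: the maximum modulus of its complex
eigenvalues (elements of the spectrum of the matrix viewed over `ℂ`). -/
noncomputable def specRad {ι : Type*} [Fintype ι] [DecidableEq ι]
    (M : Matrix ι ι ℝ) : ℝ :=
  sSup {r : ℝ | ∃ μ : ℂ, μ ∈ spectrum ℂ (M.map Complex.ofReal) ∧ r = ‖μ‖}

/-- The induced `L¹` operator norm of a real matrix: the maximum absolute column sum. -/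
noncomputable def colNorm {ι : Type*} [Fintype ι] (M : Matrix ι ι ℝ) : ℝ :=
  ⨆ q, ∑ p, |M p q|

/-- Local fecundity matrix: first row `(f 0, …, f (m-1))`, other rows zero. -/
def localF (m : ℕ) (f : Fin m → ℝ) : Matrix (Fin m) (Fin m) ℝ :=
  Matrix.of fun k' k => if (k' : ℕ) = 0 then f k else 0

/-- Local survival matrix: diagonal entries `sd k`, subdiagonal entries `ss k`,
all other entries zero. -/
def localS (m : ℕ) (sd ss : Fin m → ℝ) : Matrix (Fin m) (Fin m) ℝ :=
  Matrix.of fun k' k =>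
    if k' = k then sd k else if (k' : ℕ) = (k : ℕ) + 1 then ss k else 0

/-- Global (block-diagonal) fecundity matrix `F = ⊕ᵢ Fⁱ`, indexed by
(stage, patch) pairs. -/
def fecMat (m n : ℕ) (f : Fin m → Fin n → ℝ) :
    Matrix (Fin m × Fin n) (Fin m × Fin n) ℝ :=
  Matrix.of fun p q =>
    if p.2 = q.2 then localF m (fun k => f k q.2) p.1 q.1 else 0

/-- Global (block-diagonal) survival matrix `S = ⊕ᵢ Sⁱ`. -/
def survMat (m n : ℕ) (sd ss : Fin m → Fin n → ℝ) :
    Matrix (Fin m × Fin n) (Fin m × Fin n) ℝ :=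
  Matrix.of fun p q =>
    if p.2 = q.2 then localS m (fun k => sd k q.2) (fun k => ss k q.2) p.1 q.1 else 0

/-- Global dispersion matrix: the `(i,j)` patch block is `diag (d 0 i j, …, d (m-1) i j)`. -/
def dispMat (m n : ℕ) (d : Fin m → Fin n → Fin n → ℝ) :
    Matrix (Fin m × Fin n) (Fin m × Fin n) ℝ :=
  Matrix.of fun p q => if p.1 = q.1 then d q.1 p.2 q.2 else 0

/-- Next-generation matrix `N = D F (I - D S)⁻¹`. -/
noncomputable def nextGen (m n : ℕ) (f : Fin m → Fin n → ℝ)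
    (sd ss : Fin m → Fin n → ℝ) (d : Fin m → Fin n → Fin n → ℝ) :
    Matrix (Fin m × Fin n) (Fin m × Fin n) ℝ :=
  dispMat m n d * fecMat m n f * (1 - dispMat m n d * survMat m n sd ss)⁻¹

/-- Partial next-generation matrix `W = F (I - D S)⁻¹`. -/
noncomputable def partGen (m n : ℕ) (f : Fin m → Fin n → ℝ)
    (sd ss : Fin m → Fin n → ℝ) (d : Fin m → Fin n → Fin n → ℝ) :
    Matrix (Fin m × Fin n) (Fin m × Fin n) ℝ :=
  fecMat m n f * (1 - dispMat m n d * survMat m n sd ss)⁻¹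

/-- Newborn submatrix: keep only the rows and columns with stage index `0`
(the newborn indices). -/
def newbornSub {m n : ℕ} (hm : 0 < m)
    (B : Matrix (Fin m × Fin n) (Fin m × Fin n) ℝ) : Matrix (Fin n) (Fin n) ℝ :=
  Matrix.of fun i j => B (⟨0, hm⟩, i) (⟨0, hm⟩, j)

/-- The alternative net reproductive number `R̂₀ = max_{x ∈ 𝒳} ‖N x‖`, where `𝒳`
is the set of nonnegative `L¹`-unit vectors supported on the newborn indices. -/
noncomputable def altR0 (m n : ℕ)
    (N : Matrix (Fin m × Fin n) (Fin m × Fin n) ℝ) : ℝ :=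
  sSup {r : ℝ | ∃ x : Fin m × Fin n → ℝ, (∀ p, 0 ≤ x p) ∧ (∑ p, |x p|) = 1 ∧
    (∀ p : Fin m × Fin n, (p.1 : ℕ) ≠ 0 → x p = 0) ∧ r = ∑ p, |N.mulVec x p|}


section Aux

lemma colSum_le_colNorm {ι : Type*} [Fintype ι] (M : Matrix ι ι ℝ) (q : ι) :
    ∑ p, |M p q| ≤ colNorm M := by
  rw [colNorm]
  exact le_ciSup (Set.Finite.bddAbove (Set.finite_range fun q => ∑ p, |M p q|)) q

lemma colNorm_nonneg {ι : Type*} [Fintype ι] [Nonempty ι] (M : Matrix ι ι ℝ) :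
    0 ≤ colNorm M :=
  le_trans (Finset.sum_nonneg fun _ _ => abs_nonneg _)
    (colSum_le_colNorm M (Classical.arbitrary ι))

lemma abs_eig_le_colNorm {ι : Type*} [Fintype ι] (M : Matrix ι ι ℝ)
    (μ : ℂ) (x : ι → ℂ) (hx : x ≠ 0)
    (heig : (M.map Complex.ofReal).mulVec x = μ • x) :
    ‖μ‖ ≤ colNorm M := by
  obtain ⟨p0, hp0⟩ : ∃ p, x p ≠ 0 := by
    by_contra h; push_neg at h; exact hx (funext h)
  haveI : Nonempty ι := ⟨p0⟩
  set s := ∑ p, ‖x p‖ with hs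
  have hspos : 0 < s :=
    Finset.sum_pos' (fun p _ => norm_nonneg _)
      ⟨p0, Finset.mem_univ _, norm_pos_iff.mpr hp0⟩
  have key : ‖μ‖ * s ≤ colNorm M * s := by
    calc ‖μ‖ * s = ∑ q, ‖μ * x q‖ := by
          rw [hs, Finset.mul_sum]; simp [norm_mul]
      _ = ∑ q, ‖(M.map Complex.ofReal).mulVec x q‖ := by
          rw [heig]; simp [Pi.smul_apply, smul_eq_mul, norm_mul]
      _ ≤ ∑ q, ∑ p, |M q p| * ‖x p‖ := by
          refine Finset.sum_le_sum fun q _ => ?_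
          rw [Matrix.mulVec, dotProduct]
          refine (norm_sum_le _ _).trans (le_of_eq ?_)
          refine Finset.sum_congr rfl fun p _ => ?_
          simp [Matrix.map_apply, norm_mul]
      _ = ∑ p, (∑ q, |M q p|) * ‖x p‖ := by
          rw [Finset.sum_comm]
          exact Finset.sum_congr rfl fun p _ => by rw [Finset.sum_mul]
      _ ≤ ∑ p, colNorm M * ‖x p‖ := by
          refine Finset.sum_le_sum fun p _ => ?_
          exact mul_le_mul_of_nonneg_right (colSum_le_colNorm M p) (norm_nonneg _)
      _ = colNorm M * s := by rw [hs, Finset.mul_sum]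
  exact le_of_mul_le_mul_right key hspos

lemma DF_row_zero (m n : ℕ) (f : Fin m → Fin n → ℝ) (d : Fin m → Fin n → Fin n → ℝ)
    (p q : Fin m × Fin n) (hp : (p.1 : ℕ) ≠ 0) :
    (dispMat m n d * fecMat m n f) p q = 0 := by
  rw [Matrix.mul_apply]
  refine Finset.sum_eq_zero fun r _ => ?_
  by_cases h : p.1 = r.1
  · have : (r.1 : ℕ) ≠ 0 := h ▸ hp
    simp [fecMat, localF, this]
  · simp [dispMat, h]

lemma mulRight_row_zero {ι : Type*} [Fintype ι] (A B : Matrix ι ι ℝ) (p : ι)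
    (hA : ∀ q, A p q = 0) (q : ι) : (A * B) p q = 0 := by
  rw [Matrix.mul_apply]
  exact Finset.sum_eq_zero fun r _ => by rw [hA r, zero_mul]

lemma newborn_colNorm_le {m n : ℕ} (hm : 0 < m) (hn : 0 < n)
    (B : Matrix (Fin m × Fin n) (Fin m × Fin n) ℝ) :
    colNorm (newbornSub hm B) ≤ colNorm B := by
  haveI : Nonempty (Fin n) := ⟨⟨0, hn⟩⟩
  rw [colNorm]
  refine ciSup_le fun j => ?_
  refine le_trans ?_ (colSum_le_colNorm B (⟨0, hm⟩, j))
  calc ∑ i, |newbornSub hm B i j|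
      = ∑ i, |B (⟨0, hm⟩, i) (⟨0, hm⟩, j)| := rfl
    _ ≤ ∑ k : Fin m, ∑ i : Fin n, |B (k, i) (⟨0, hm⟩, j)| := by
        refine Finset.single_le_sum (f := fun k => ∑ i : Fin n, |B (k, i) (⟨0, hm⟩, j)|)
          (fun k _ => Finset.sum_nonneg fun i _ => abs_nonneg _) (Finset.mem_univ (⟨0, hm⟩ : Fin m))
    _ = ∑ p : Fin m × Fin n, |B p (⟨0, hm⟩, j)| := by rw [Fintype.sum_prod_type]

lemma exists_eigvec {ι : Type*} [Fintype ι] [DecidableEq ι] [Nonempty ι]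
    (A : Matrix ι ι ℂ) (μ : ℂ) (hμ : μ ∈ spectrum ℂ A) :
    ∃ x : ι → ℂ, x ≠ 0 ∧ A.mulVec x = μ • x := by
  rw [spectrum.mem_iff] at hμ
  have hdet : (μ • (1 : Matrix ι ι ℂ) - A).det = 0 := by
    by_contra h
    apply hμ
    have halg : algebraMap ℂ (Matrix ι ι ℂ) μ = μ • (1 : Matrix ι ι ℂ) :=
      Algebra.algebraMap_eq_smul_one μ
    rw [halg, Matrix.isUnit_iff_isUnit_det]
    exact isUnit_iff_ne_zero.mpr h
  obtain ⟨x, hx0, hx⟩ := (Matrix.exists_mulVec_eq_zero_iff).mpr hdet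
  refine ⟨x, hx0, ?_⟩
  rw [Matrix.sub_mulVec, sub_eq_zero] at hx
  rw [← hx, Matrix.smul_mulVec, Matrix.one_mulVec]

end Aux

theorem stmt4
    (m n : ℕ) (hm : 2 ≤ m) (hn : 1 ≤ n)
    (f : Fin m → Fin n → ℝ) (hf : ∀ k i, 0 ≤ f k i)
    (sd ss : Fin m → Fin n → ℝ)
    (hsd : ∀ k i, 0 ≤ sd k i) (hss : ∀ k i, 0 ≤ ss k i)
    (hs1 : ∀ (k : Fin m) (i : Fin n),
      sd k i + (if (k : ℕ) + 1 < m then ss k i else 0) < 1)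
    (d : Fin m → Fin n → Fin n → ℝ)
    (hd0 : ∀ k i j, 0 ≤ d k i j) (hd1 : ∀ k i j, d k i j ≤ 1)
    (hdsum : ∀ k j, ∑ i, d k i j = 1) :
    specRad (nextGen m n f sd ss d) ≤
        colNorm (newbornSub (show 0 < m by omega) (nextGen m n f sd ss d)) ∧
      colNorm (newbornSub (show 0 < m by omega) (nextGen m n f sd ss d)) ≤
        colNorm (nextGen m n f sd ss d) ∧
      colNorm (newbornSub (show 0 < m by omega) (partGen m n f sd ss d)) ≤
        colNorm (partGen m n f sd ss d) := by
  have hm0 : 0 < m := by omega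
  have hn0 : 0 < n := by omega
  haveI : Nonempty (Fin n) := ⟨⟨0, hn0⟩⟩
  haveI : Nonempty (Fin m × Fin n) := ⟨(⟨0, hm0⟩, ⟨0, hn0⟩)⟩
  set N := nextGen m n f sd ss d with hN
  have hrow : ∀ p q : Fin m × Fin n, (p.1 : ℕ) ≠ 0 → N p q = 0 := by
    intro p q hp
    show ((dispMat m n d * fecMat m n f) *
        (1 - dispMat m n d * survMat m n sd ss)⁻¹) p q = 0
    exact mulRight_row_zero _ _ p (fun r => DF_row_zero m n f d p r hp) q
  refine ⟨?_, newborn_colNorm_le hm0 hn0 _, newborn_colNorm_le hm0 hn0 _⟩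
  rw [specRad]
  refine Real.sSup_le ?_ (colNorm_nonneg _)
  rintro r ⟨μ, hμ, rfl⟩
  by_cases hμ0 : μ = 0
  · simpa [hμ0] using colNorm_nonneg (newbornSub hm0 N)
  obtain ⟨x, hx0, hx⟩ := exists_eigvec (N.map Complex.ofReal) μ hμ
  have hsupp : ∀ p : Fin m × Fin n, (p.1 : ℕ) ≠ 0 → x p = 0 := by
    intro p hp
    have h1 : (N.map Complex.ofReal).mulVec x p = 0 := by
      rw [Matrix.mulVec, dotProduct]
      exact Finset.sum_eq_zero fun q _ => by
        simp [Matrix.map_apply, hrow p q hp]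
    have h2 : μ * x p = 0 := by
      have h3 := congrFun hx p
      rw [h1] at h3
      simpa [Pi.smul_apply, smul_eq_mul] using h3.symm
    exact (mul_eq_zero.mp h2).resolve_left hμ0
  set y : Fin n → ℂ := fun i => x (⟨0, hm0⟩, i) with hy
  have hy0 : y ≠ 0 := by
    obtain ⟨p, hp⟩ : ∃ p, x p ≠ 0 := by
      by_contra h; push_neg at h; exact hx0 (funext h)
    have hp1 : (p.1 : ℕ) = 0 := by
      by_contra h; exact hp (hsupp p h)
    have hpe : p = (⟨0, hm0⟩, p.2) := by
      obtain ⟨a, b⟩ := p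
      exact Prod.ext (Fin.ext hp1) rfl
    intro h0
    apply hp
    rw [hpe]
    exact congrFun h0 p.2
  have heig : ((newbornSub hm0 N).map Complex.ofReal).mulVec y = μ • y := by
    funext i
    have h0 := congrFun hx (⟨0, hm0⟩, i)
    have hsum : ∑ q : Fin m × Fin n, (N.map Complex.ofReal) (⟨0, hm0⟩, i) q * x q
        = ∑ j, ((newbornSub hm0 N).map Complex.ofReal) i j * y j := by
      rw [Fintype.sum_prod_type]
      rw [Fintype.sum_eq_single (⟨0, hm0⟩ : Fin m)
        (fun k hk => Finset.sum_eq_zero fun j _ => by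
          have hk0 : (k : ℕ) ≠ 0 := fun h => hk (Fin.ext h)
          rw [hsupp (k, j) hk0, mul_zero])]
      rfl
    rw [Matrix.mulVec, dotProduct] at h0 ⊢
    rw [← hsum, h0]
    rfl
  exact abs_eig_le_colNorm (newbornSub hm0 N) μ y hy0 heig
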